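/- A solution ψ on the class of monotone games with agent set N satisfies PO (Pareto optimality), ETP (equal treatment property) and UM (unequal marginality) if and only if ψ is the Shapley value solution φ. -/

import Mathlib

open Finset

/-- A monotone game on agent set `Fin n`: `u ∅ = 0` and `u` is monotone w.r.t. inclusion. -/
def IsMonotoneGame (n : ℕ) (u : Finset (Fin n) → ℝ) : Prop :=
  u ∅ = 0 ∧ ∀ S T : Finset (Fin n), S ⊆ T → u S ≤ u T

/-- The Shapley weight `w_S = |S|! (n - |S| - 1)! / n!`. -/
noncomputable def shapleyWeight (n : ℕ) (S : Finset (Fin n)) : ℝ :=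
  ((S.card.factorial * (n - S.card - 1).factorial : ℕ) : ℝ) / (n.factorial : ℝ)

/-- The Shapley value solution `φ_i(u) = ∑_{S ⊆ N \ {i}} w_S (u (S ∪ {i}) - u S)`. -/
noncomputable def shapley {n : ℕ} (u : Finset (Fin n) → ℝ) (i : Fin n) : ℝ :=
  ∑ S ∈ (Finset.univ.erase i).powerset, shapleyWeight n S * (u (insert i S) - u S)

section Aux

variable {α : Type*} [DecidableEq α]

lemma sum_pow_neg_one_real (x : Finset α) :
    (∑ m ∈ x.powerset, (-1 : ℝ) ^ m.card) = if x = ∅ then 1 else 0 := by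
  have := @Finset.sum_powerset_neg_one_pow_card α _ x
  have h2 : ((∑ m ∈ x.powerset, (-1 : ℤ) ^ m.card : ℤ) : ℝ)
      = ∑ m ∈ x.powerset, (-1 : ℝ) ^ m.card := by push_cast; ring_nf
  rw [← h2, this]
  split <;> simp

/-- alternating sum over interval [R, B] -/
lemma core_alt (R B : Finset α) (hRB : R ⊆ B) :
    ∑ T ∈ B.powerset.filter (fun T => R ⊆ T), (-1:ℝ)^(T.card + R.card)
      = if B = R then 1 else 0 := by
  classical
  have hbij : ∑ T ∈ B.powerset.filter (fun T => R ⊆ T), (-1:ℝ)^(T.card + R.card)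
      = ∑ T' ∈ (B \ R).powerset, (-1:ℝ)^(T'.card) := by
    apply Finset.sum_nbij' (fun T => T \ R) (fun T' => T' ∪ R)
    · intro T hT
      simp only [mem_filter, mem_powerset] at hT
      exact mem_powerset.2 (sdiff_subset_sdiff hT.1 (Subset.refl R))
    · intro T' hT'
      simp only [mem_powerset] at hT'
      simp only [mem_filter, mem_powerset]
      constructor
      · exact union_subset (hT'.trans (sdiff_subset)) hRB
      · exact subset_union_right
    · intro T hT
      simp only [mem_filter, mem_powerset] at hT
      exact sdiff_union_of_subset hT.2
    · intro T' hT'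
      simp only [mem_powerset] at hT'
      have : Disjoint T' R := disjoint_of_subset_left hT' sdiff_disjoint
      rw [union_sdiff_right, sdiff_eq_self_of_disjoint this]
    · intro T hT
      simp only [mem_filter, mem_powerset] at hT
      have : (T \ R).card = T.card - R.card := card_sdiff_of_subset hT.2
      have hle : R.card ≤ T.card := card_le_card hT.2
      rw [this]
      have : T.card - R.card + (R.card + R.card) = T.card + R.card := by omega
      calc (-1:ℝ)^(T.card + R.card) = (-1:ℝ)^(T.card - R.card + (R.card + R.card)) := by rw [this]
      _ = (-1:ℝ)^(T.card - R.card) * ((-1)^R.card * (-1)^R.card) := by rw [pow_add, pow_add]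
      _ = (-1:ℝ)^(T.card - R.card) := by
            rw [← pow_add, ← two_mul, pow_mul]
            norm_num
  rw [hbij, sum_pow_neg_one_real]
  have : B \ R = ∅ ↔ B = R := by
    constructor
    · intro h; exact Subset.antisymm (by rwa [sdiff_eq_empty_iff_subset] at h) hRB
    · intro h; simp [h]
  simp only [this]

noncomputable def gameOf (a : Finset α → ℝ) (S : Finset α) : ℝ := ∑ T ∈ S.powerset, a T

noncomputable def divi (u : Finset α → ℝ) (T : Finset α) : ℝ :=
  ∑ S ∈ T.powerset, (-1:ℝ)^(T.card + S.card) * u S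

lemma neg_pow_split (t s r : ℕ) : (-1:ℝ)^(t+s) = (-1)^(t+r) * (-1)^(s+r) := by
  have h2 : ((-1:ℝ)) ^ (2 * r) = 1 := by rw [pow_mul]; norm_num
  calc (-1:ℝ)^(t+s) = (-1:ℝ)^(t+s) * (-1:ℝ)^(2*r) := by rw [h2, mul_one]
  _ = (-1:ℝ)^(t+s+2*r) := by rw [← pow_add]
  _ = (-1:ℝ)^((t+r)+(s+r)) := by congr 1; omega
  _ = (-1:ℝ)^(t+r) * (-1:ℝ)^(s+r) := by rw [pow_add]

lemma swap_pairs (B : Finset α) (F : Finset α → Finset α → ℝ) :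
    ∑ T ∈ B.powerset, ∑ R ∈ T.powerset, F T R
      = ∑ R ∈ B.powerset, ∑ T ∈ B.powerset.filter (fun T => R ⊆ T), F T R := by
  classical
  have h1 : ∀ T ∈ B.powerset, ∑ R ∈ T.powerset, F T R
      = ∑ R ∈ B.powerset, if R ⊆ T then F T R else 0 := by
    intro T hT
    rw [mem_powerset] at hT
    rw [← Finset.sum_filter]
    apply Finset.sum_congr _ (fun x _ => rfl)
    ext R
    simp only [mem_powerset, mem_filter]
    exact ⟨fun h => ⟨h.trans hT, h⟩, fun h => h.2⟩
  rw [Finset.sum_congr rfl h1, Finset.sum_comm]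
  exact Finset.sum_congr rfl fun R _ => (Finset.sum_filter _ _).symm

lemma interval_collapse (B : Finset α) (g : Finset α → ℝ) :
    (∑ R ∈ B.powerset, (∑ T ∈ B.powerset.filter (fun T => R ⊆ T), (-1:ℝ)^(T.card + R.card)) * g R)
      = g B := by
  classical
  have h : ∀ R ∈ B.powerset,
      (∑ T ∈ B.powerset.filter (fun T => R ⊆ T), (-1:ℝ)^(T.card + R.card)) * g R
      = if R = B then g B else 0 := by
    intro R hR
    rw [mem_powerset] at hR
    rw [core_alt R B hR]
    by_cases h : B = R
    · subst h; simp
    · rw [if_neg h, if_neg (Ne.symm h), zero_mul]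
  rw [Finset.sum_congr rfl h]
  simp [Finset.sum_ite_eq' B.powerset B (fun _ => g B), mem_powerset_self]

lemma divi_gameOf (a : Finset α → ℝ) (T : Finset α) : divi (gameOf a) T = a T := by
  classical
  unfold divi gameOf
  have : ∀ S ∈ T.powerset, (-1:ℝ)^(T.card + S.card) * ∑ R ∈ S.powerset, a R
      = ∑ R ∈ S.powerset, (-1:ℝ)^(T.card + S.card) * a R := by
    intro S _; rw [Finset.mul_sum]
  rw [Finset.sum_congr rfl this, swap_pairs]
  have h3 : ∀ R ∈ T.powerset,
      ∑ S ∈ T.powerset.filter (fun S => R ⊆ S), (-1:ℝ)^(T.card + S.card) * a R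
        = if R = T then a R else 0 := by
    intro R hR
    rw [mem_powerset] at hR
    have e1 : ∀ S ∈ T.powerset.filter (fun S => R ⊆ S),
        (-1:ℝ)^(T.card + S.card) * a R
          = ((-1:ℝ)^(T.card + R.card) * a R) * (-1:ℝ)^(S.card + R.card) := by
      intro S _
      rw [neg_pow_split T.card S.card R.card]; ring
    rw [Finset.sum_congr rfl e1, ← Finset.mul_sum, core_alt R T hR]
    by_cases h : T = R
    · subst h
      rw [if_pos rfl, if_pos rfl, mul_one]
      calc (-1:ℝ)^(T.card + T.card) * a T = (-1:ℝ)^(2*T.card) * a T := by congr 2; omega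
      _ = a T := by rw [pow_mul]; norm_num
    · rw [if_neg h, if_neg (Ne.symm h), mul_zero]
  rw [Finset.sum_congr rfl h3]
  simp [Finset.sum_ite_eq' T.powerset T a, mem_powerset_self]

lemma gameOf_divi (u : Finset α → ℝ) (S : Finset α) : gameOf (divi u) S = u S := by
  classical
  unfold gameOf divi
  rw [swap_pairs, ← interval_collapse S u]
  apply Finset.sum_congr rfl
  intro R hR
  rw [Finset.sum_mul]

noncomputable def marg (a : Finset α → ℝ) (l : α) (S : Finset α) : ℝ :=
  a {l} + ∑ T ∈ (insert l S).powerset.filter (fun T => l ∈ T ∧ 2 ≤ T.card), a T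

lemma marg_spec (a : Finset α → ℝ) {l : α} {S : Finset α} (h : l ∉ S) :
    gameOf a (insert l S) - gameOf a S = marg a l S := by
  classical
  unfold gameOf marg
  have h2 : (insert l S).powerset.filter (fun T => l ∉ T) = S.powerset := by
    ext T
    simp only [mem_filter, mem_powerset]
    constructor
    · rintro ⟨hT, hl⟩
      intro x hx
      rcases mem_insert.1 (hT hx) with h'|h'
      · exact absurd (h' ▸ hx) hl
      · exact h'
    · intro hT
      exact ⟨hT.trans (subset_insert _ _), fun hl => h (hT hl)⟩
  have h3 : (insert l S).powerset.filter (fun T => l ∈ T)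
      = insert {l} ((insert l S).powerset.filter (fun T => l ∈ T ∧ 2 ≤ T.card)) := by
    ext T
    simp only [mem_insert, mem_filter, mem_powerset]
    constructor
    · rintro ⟨hT, hl⟩
      by_cases hc : 2 ≤ T.card
      · exact Or.inr ⟨hT, hl, hc⟩
      · left
        have h1 : T.card = 1 := by
          have hne : T.Nonempty := ⟨l, hl⟩
          have := Finset.card_pos.2 hne
          omega
        rcases Finset.card_eq_one.1 h1 with ⟨x, hx⟩
        subst hx
        rw [Finset.mem_singleton] at hl
        rw [hl]
    · rintro (h'|⟨hT, hl, _⟩)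
      · subst h'
        exact ⟨singleton_subset_iff.2 (mem_insert_self l S), mem_singleton_self l⟩
      · exact ⟨hT, hl⟩
  have hsum : ∑ T ∈ (insert l S).powerset, a T
      = (∑ T ∈ (insert l S).powerset.filter (fun T => l ∈ T), a T)
        + ∑ T ∈ (insert l S).powerset.filter (fun T => l ∉ T), a T :=
    (Finset.sum_filter_add_sum_filter_not _ _ _).symm
  have hins : ∑ T ∈ (insert l S).powerset.filter (fun T => l ∈ T), a T
      = a {l} + ∑ T ∈ (insert l S).powerset.filter (fun T => l ∈ T ∧ 2 ≤ T.card), a T := by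
    rw [h3, Finset.sum_insert]
    simp only [mem_filter, card_singleton]
    intro h'
    omega
  rw [hsum, h2, hins]
  ring

lemma marg_divi (u : Finset α → ℝ) {l : α} {S : Finset α} (h : l ∉ S) :
    u (insert l S) - u S = marg (divi u) l S := by
  rw [← gameOf_divi u (insert l S), ← gameOf_divi u S]
  exact marg_spec _ h

/-- a game with `u ∅ = 0` and nonneg marginals is monotone -/
lemma monotone_of_marg {u : Finset α → ℝ}
    (h : ∀ (l : α) (S : Finset α), l ∉ S → 0 ≤ u (insert l S) - u S) :
    ∀ S T : Finset α, S ⊆ T → u S ≤ u T := by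
  classical
  intro S T hST
  have key : ∀ (k : ℕ) (S T : Finset α), S ⊆ T → (T \ S).card = k → u S ≤ u T := by
    intro k
    induction k with
    | zero =>
      intro S T hST hcard
      have he : T \ S = ∅ := card_eq_zero.1 hcard
      have hTS : T ⊆ S := by
        intro x hx
        by_contra hxS
        have hmem : x ∈ T \ S := mem_sdiff.2 ⟨hx, hxS⟩
        rw [he] at hmem
        exact absurd hmem (notMem_empty x)
      rw [Subset.antisymm hST hTS]
    | succ k ih =>
      intro S T hST hcard
      have hne : (T \ S).Nonempty := by
        rw [← card_pos, hcard]; omega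
      obtain ⟨x, hx⟩ := hne
      rw [mem_sdiff] at hx
      have h1 : u S ≤ u (insert x S) := by
        have := h x S hx.2
        linarith
      have h2 : insert x S ⊆ T := insert_subset hx.1 hST
      have h3 : (T \ insert x S).card = k := by
        have : T \ insert x S = (T \ S).erase x := by
          ext y
          simp only [mem_sdiff, mem_insert, mem_erase, not_or]
          tauto
        rw [this, card_erase_of_mem (mem_sdiff.2 hx), hcard]
        omega
      exact h1.trans (ih _ _ h2 h3)
  exact key _ S T hST rfl

end Aux

variable {n : ℕ}

variable {n : ℕ}

lemma shapleyWeight_nonneg (S : Finset (Fin n)) : 0 ≤ shapleyWeight n S := by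
  unfold shapleyWeight
  positivity

lemma shapley_um (u v : Finset (Fin n) → ℝ) (i : Fin n)
    (h : ∀ S : Finset (Fin n), u (insert i S) - u S ≥ v (insert i S) - v S) :
    shapley u i ≥ shapley v i := by
  unfold shapley
  apply Finset.sum_le_sum
  intro S _
  exact mul_le_mul_of_nonneg_left (h S) (shapleyWeight_nonneg S)

lemma shapley_marg_eq (u v : Finset (Fin n) → ℝ) (i : Fin n)
    (h : ∀ S : Finset (Fin n), u (insert i S) - u S = v (insert i S) - v S) :
    shapley u i = shapley v i :=
  le_antisymm (shapley_um v u i (fun S => (h S).symm.ge)) (shapley_um u v i (fun S => (h S).ge))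

lemma shapley_etp (u : Finset (Fin n) → ℝ) (i j : Fin n)
    (h : ∀ S : Finset (Fin n), i ∉ S → j ∉ S →
      u (insert i S) - u S = u (insert j S) - u S) :
    shapley u i = shapley u j := by
  classical
  by_cases hij : i = j
  · rw [hij]
  unfold shapley
  apply Finset.sum_nbij' (fun S => if j ∈ S then insert i (S.erase j) else S)
    (fun S => if i ∈ S then insert j (S.erase i) else S)
  · -- membership forward
    intro S hS
    rw [mem_powerset, subset_erase] at hS ⊢
    by_cases hj : j ∈ S
    · rw [if_pos hj]
      constructor
      · intro x hx
        rcases mem_insert.1 hx with h'|h'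
        · exact h' ▸ mem_univ x
        · exact mem_univ x
      · intro hmem
        rcases mem_insert.1 hmem with h'|h'
        · exact hij (h'.symm)
        · exact (Finset.mem_erase.1 h').1 rfl
    · rw [if_neg hj]
      exact ⟨fun x _ => mem_univ x, hj⟩
  · -- membership backward
    intro S hS
    rw [mem_powerset, subset_erase] at hS ⊢
    by_cases hi : i ∈ S
    · rw [if_pos hi]
      constructor
      · intro x _; exact mem_univ x
      · intro hmem
        rcases mem_insert.1 hmem with h'|h'
        · exact hij h'
        · exact (Finset.mem_erase.1 h').1 rfl
    · rw [if_neg hi]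
      exact ⟨fun x _ => mem_univ x, hi⟩
  · -- left inverse
    intro S hS
    rw [mem_powerset, subset_erase] at hS
    by_cases hj : j ∈ S
    · rw [if_pos hj, if_pos (mem_insert_self i _), erase_insert (by simp [hS.2, hij])]
      exact insert_erase hj
    · rw [if_neg hj, if_neg hS.2]
  · -- right inverse
    intro S hS
    rw [mem_powerset, subset_erase] at hS
    by_cases hi : i ∈ S
    · rw [if_pos hi, if_pos (mem_insert_self j _), erase_insert (by simp [hS.2]),
        insert_erase hi]
    · rw [if_neg hi, if_neg hS.2]
  · -- value equality
    intro S hS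
    rw [mem_powerset, subset_erase] at hS
    by_cases hj : j ∈ S
    · rw [if_pos hj]
      have hcard : (insert i (S.erase j)).card = S.card := by
        rw [card_insert_of_notMem (by simp [hS.2, hij]), card_erase_of_mem hj]
        have : 0 < S.card := card_pos.2 ⟨j, hj⟩
        omega
      have hw : shapleyWeight n S = shapleyWeight n (insert i (S.erase j)) := by
        unfold shapleyWeight; rw [hcard]
      rw [← hw]
      have hR : i ∉ S.erase j := by simp [hS.2, hij]
      have hjR : j ∉ S.erase j := notMem_erase _ _
      have e1 : insert i S = insert j (insert i (S.erase j)) := by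
        rw [Finset.insert_comm, insert_erase hj]
      have e2 : S = insert j (S.erase j) := (insert_erase hj).symm
      have key := h (S.erase j) hR hjR
      -- u (insert i R) - u R = u (insert j R) - u R  with R = S.erase j
      rw [e1]
      have e3 : u S = u (insert j (S.erase j)) := by rw [insert_erase hj]
      rw [e3]
      have e4 : u (insert j (S.erase j)) = u (insert i (S.erase j)) := by linarith [key]
      rw [e4]
    · rw [if_neg hj]
      have := h S hS.2 hj
      rw [this]

lemma po_coeff (hn : 1 ≤ n) (t : ℕ) (h1 : 1 ≤ t) (ht : t ≤ n) :
    (t:ℝ) * ((((t-1).factorial * (n - (t-1) - 1).factorial : ℕ)) / (n.factorial:ℝ))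
      - ((n - t : ℕ):ℝ) * (((t.factorial * (n - t - 1).factorial : ℕ):ℝ) / (n.factorial:ℝ))
      = if t = n then 1 else 0 := by
  have hfac : (n.factorial : ℝ) ≠ 0 := by positivity
  by_cases he : t = n
  · subst he
    rw [if_pos rfl]
    have e1 : t - (t-1) - 1 = 0 := by omega
    rw [e1, Nat.sub_self]
    simp only [Nat.factorial_zero, mul_one, Nat.cast_zero, zero_mul, sub_zero]
    rw [← mul_div_assoc, ← Nat.cast_mul, Nat.mul_factorial_pred (by omega : t ≠ 0), div_self hfac]
  · rw [if_neg he]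
    have hlt : t < n := lt_of_le_of_ne ht he
    have e1 : n - (t-1) - 1 = n - t := by omega
    rw [e1]
    have h0 : 0 < n - t := by omega
    have n2 : t * ((t-1).factorial * (n-t).factorial) = t.factorial * (n-t).factorial := by
      rw [← mul_assoc, Nat.mul_factorial_pred (by omega : t ≠ 0)]
    have n3 : (n-t) * (t.factorial * (n-t-1).factorial) = t.factorial * (n-t).factorial := by
      rw [← Nat.mul_factorial_pred (by omega : n - t ≠ 0)]; ring
    have key : (t:ℝ) * (((t-1).factorial * (n - t).factorial : ℕ):ℝ)
        = ((n - t : ℕ):ℝ) * ((t.factorial * (n - t - 1).factorial : ℕ):ℝ) := by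
      rw [← Nat.cast_mul, ← Nat.cast_mul, n2, n3]
    have hrw : (t:ℝ) * ((((t-1).factorial * (n - t).factorial : ℕ):ℝ) / (n.factorial:ℝ))
        - ((n - t : ℕ):ℝ) * (((t.factorial * (n - t - 1).factorial : ℕ):ℝ) / (n.factorial:ℝ))
        = ((t:ℝ) * (((t-1).factorial * (n - t).factorial : ℕ):ℝ)
            - ((n - t : ℕ):ℝ) * (((t.factorial * (n - t - 1).factorial : ℕ):ℝ))) / (n.factorial:ℝ) := by
      ring
    rw [hrw, key, sub_self, zero_div]

lemma shapley_po (hn : 1 ≤ n) (u : Finset (Fin n) → ℝ) (h0 : u ∅ = 0) :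
    ∑ i, shapley u i = u Finset.univ := by
  classical
  have hps : ∀ i : Fin n, (univ.erase i).powerset = univ.powerset.filter (fun S => i ∉ S) := by
    intro i; ext S
    simp [mem_powerset, mem_filter, subset_erase, subset_univ]
  have step1 : ∑ i, shapley u i
      = ∑ S ∈ univ.powerset, ∑ i ∈ univ \ S, shapleyWeight n S * (u (insert i S) - u S) := by
    calc ∑ i, shapley u i
        = ∑ i : Fin n, ∑ S ∈ univ.powerset,
            if i ∉ S then shapleyWeight n S * (u (insert i S) - u S) else 0 := by
          unfold shapley
          refine Finset.sum_congr rfl fun i _ => ?_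
          rw [hps i, Finset.sum_filter]
      _ = ∑ S ∈ univ.powerset, ∑ i : Fin n,
            if i ∉ S then shapleyWeight n S * (u (insert i S) - u S) else 0 :=
          Finset.sum_comm
      _ = ∑ S ∈ univ.powerset, ∑ i ∈ univ \ S, shapleyWeight n S * (u (insert i S) - u S) := by
          refine Finset.sum_congr rfl fun S _ => ?_
          rw [← Finset.sum_filter]
          congr 1
          ext i; simp [mem_sdiff]
  have step2 : ∑ S ∈ univ.powerset, ∑ i ∈ univ \ S, shapleyWeight n S * (u (insert i S) - u S)
      = (∑ S ∈ univ.powerset, ∑ i ∈ univ \ S, shapleyWeight n S * u (insert i S))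
        - ∑ S ∈ univ.powerset, ((n - S.card : ℕ):ℝ) * shapleyWeight n S * u S := by
    rw [← Finset.sum_sub_distrib]
    refine Finset.sum_congr rfl fun S hS => ?_
    have hcard : (univ \ S).card = n - S.card := by
      rw [card_sdiff_of_subset (subset_univ S), card_univ, Fintype.card_fin]
    calc ∑ i ∈ univ \ S, shapleyWeight n S * (u (insert i S) - u S)
        = ∑ i ∈ univ \ S, (shapleyWeight n S * u (insert i S) - shapleyWeight n S * u S) := by
          refine Finset.sum_congr rfl fun i _ => by ring
      _ = (∑ i ∈ univ \ S, shapleyWeight n S * u (insert i S))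
            - (univ \ S).card • (shapleyWeight n S * u S) := by
          rw [Finset.sum_sub_distrib, Finset.sum_const]
      _ = _ := by
          rw [hcard, nsmul_eq_mul]
          ring
  have step3 : (∑ S ∈ univ.powerset, ∑ i ∈ univ \ S, shapleyWeight n S * u (insert i S))
      = ∑ T ∈ univ.powerset, ∑ i ∈ T, shapleyWeight n (T.erase i) * u T := by
    rw [Finset.sum_sigma', Finset.sum_sigma']
    apply Finset.sum_nbij' (fun (x : Σ _ : Finset (Fin n), Fin n) =>
        (⟨insert x.2 x.1, x.2⟩ : Σ _ : Finset (Fin n), Fin n))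
      (fun y => ⟨y.1.erase y.2, y.2⟩)
    · intro x hx
      rw [Finset.mem_sigma] at hx ⊢
      exact ⟨mem_powerset.2 (subset_univ _), mem_insert_self _ _⟩
    · intro y hy
      rw [Finset.mem_sigma] at hy ⊢
      refine ⟨mem_powerset.2 (subset_univ _), mem_sdiff.2 ⟨mem_univ _, notMem_erase _ _⟩⟩
    · rintro ⟨S, i⟩ hx
      rw [Finset.mem_sigma, mem_sdiff] at hx
      simp [erase_insert hx.2.2]
    · rintro ⟨T, i⟩ hy
      rw [Finset.mem_sigma] at hy
      simp [insert_erase hy.2]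
    · intro x hx
      rw [Finset.mem_sigma, mem_sdiff] at hx
      rw [erase_insert hx.2.2]
  have step4 : ∀ T ∈ univ.powerset, (∑ i ∈ T, shapleyWeight n (T.erase i) * u T)
      = (T.card : ℝ) * ((((T.card-1).factorial * (n - (T.card-1) - 1).factorial : ℕ):ℝ)
          / (n.factorial:ℝ)) * u T := by
    intro T hT
    have hc : ∀ i ∈ T, shapleyWeight n (T.erase i) * u T
        = ((((T.card-1).factorial * (n - (T.card-1) - 1).factorial : ℕ):ℝ)
            / (n.factorial:ℝ)) * u T := by
      intro i hi
      unfold shapleyWeight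
      rw [card_erase_of_mem hi]
    rw [Finset.sum_congr rfl hc, Finset.sum_const, nsmul_eq_mul]
    ring
  have hpt : ∀ T ∈ univ.powerset,
      ((T.card : ℝ) * ((((T.card-1).factorial * (n - (T.card-1) - 1).factorial : ℕ):ℝ)
          / (n.factorial:ℝ)) * u T - ((n - T.card : ℕ):ℝ) * shapleyWeight n T * u T)
        = (if T = univ then 1 else 0) * u T := by
    intro T hT
    by_cases hTe : T = ∅
    · subst hTe
      simp [h0]
    · have h1 : 1 ≤ T.card := card_pos.2 (nonempty_of_ne_empty hTe)
      have ht : T.card ≤ n := by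
        have := Finset.card_le_univ T
        rwa [Fintype.card_fin] at this
      have hco := po_coeff hn T.card h1 ht
      have hiff : (T = univ) = (T.card = n) := by
        apply propext
        rw [← Finset.card_eq_iff_eq_univ]
        rw [Fintype.card_fin]
      unfold shapleyWeight
      simp only [hiff]
      calc (T.card : ℝ) * ((((T.card-1).factorial * (n - (T.card-1) - 1).factorial : ℕ):ℝ)
          / (n.factorial:ℝ)) * u T
          - ((n - T.card : ℕ):ℝ) * ((((T.card).factorial * (n - T.card - 1).factorial : ℕ):ℝ)
            / (n.factorial:ℝ)) * u T
          = ((T.card : ℝ) * ((((T.card-1).factorial * (n - (T.card-1) - 1).factorial : ℕ):ℝ)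
              / (n.factorial:ℝ))
            - ((n - T.card : ℕ):ℝ) * ((((T.card).factorial * (n - T.card - 1).factorial : ℕ):ℝ)
              / (n.factorial:ℝ))) * u T := by ring
        _ = (if T.card = n then 1 else 0) * u T := by rw [hco]
  rw [step1, step2, step3, Finset.sum_congr rfl step4, ← Finset.sum_sub_distrib,
    Finset.sum_congr rfl hpt]
  have : ∀ T ∈ univ.powerset, (if T = univ then 1 else 0) * u T
      = (if T = univ then u T else 0) := by
    intro T _
    split <;> simp
  rw [Finset.sum_congr rfl this,
    Finset.sum_ite_eq' univ.powerset univ u]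
  simp [mem_powerset_self]

-- ====== new content ======

lemma divi_empty (u : Finset (Fin n) → ℝ) : divi u ∅ = u ∅ := by
  simp [divi]

lemma divi_singleton (u : Finset (Fin n) → ℝ) (x : Fin n) :
    divi u {x} = u {x} - u ∅ := by
  have : ({x} : Finset (Fin n)).powerset = {∅, {x}} := by
    rw [show ({x} : Finset (Fin n)) = insert x ∅ from rfl, Finset.powerset_insert]
    simp [Finset.powerset_empty]
  rw [divi, this, Finset.sum_pair (Ne.symm (Finset.singleton_ne_empty x))]
  simp
  ring

open Classical in
noncomputable def TT (u : Finset (Fin n) → ℝ) : Finset (Finset (Fin n)) :=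
  univ.powerset.filter (fun T => 2 ≤ T.card ∧ divi u T ≠ 0)

noncomputable def mm (u : Finset (Fin n) → ℝ) : ℕ := (TT u).card

lemma mem_TT {u : Finset (Fin n) → ℝ} {T : Finset (Fin n)} :
    T ∈ TT u ↔ 2 ≤ T.card ∧ divi u T ≠ 0 := by
  simp [TT, mem_filter, mem_powerset, subset_univ]

def PO (ψ : (Finset (Fin n) → ℝ) → Fin n → ℝ) : Prop :=
  ∀ u, IsMonotoneGame n u → ∑ i, ψ u i = u Finset.univ
def ETP (ψ : (Finset (Fin n) → ℝ) → Fin n → ℝ) : Prop :=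
  ∀ u, IsMonotoneGame n u → ∀ i j : Fin n,
    (∀ S : Finset (Fin n), i ∉ S → j ∉ S →
      u (insert i S) - u S = u (insert j S) - u S) → ψ u i = ψ u j
def UM (ψ : (Finset (Fin n) → ℝ) → Fin n → ℝ) : Prop :=
  ∀ u v, IsMonotoneGame n u → IsMonotoneGame n v → ∀ i : Fin n,
    (∀ S : Finset (Fin n), u (insert i S) - u S ≥ v (insert i S) - v S) →
    ψ u i ≥ ψ v i

lemma um_eq {ψ : (Finset (Fin n) → ℝ) → Fin n → ℝ} (hum : UM ψ)
    {u v : Finset (Fin n) → ℝ} (hu : IsMonotoneGame n u) (hv : IsMonotoneGame n v)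
    (i : Fin n) (h : ∀ S, u (insert i S) - u S = v (insert i S) - v S) :
    ψ u i = ψ v i :=
  le_antisymm (hum v u hv hu i fun S => (h S).symm.ge) (hum u v hu hv i fun S => (h S).ge)

lemma sum_ge_negM (u : Finset (Fin n) → ℝ) (F : Finset (Finset (Fin n)))
    (g : Finset (Fin n) → ℝ) (hg : ∀ T ∈ F, |g T| ≤ |divi u T|) :
    -(∑ T ∈ univ.powerset, |divi u T|) ≤ ∑ T ∈ F, g T := by
  have h1 : |∑ T ∈ F, g T| ≤ ∑ T ∈ F, |g T| := Finset.abs_sum_le_sum_abs _ _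
  have h2 : ∑ T ∈ F, |g T| ≤ ∑ T ∈ F, |divi u T| := Finset.sum_le_sum hg
  have h3 : ∑ T ∈ F, |divi u T| ≤ ∑ T ∈ univ.powerset, |divi u T| := by
    apply Finset.sum_le_sum_of_subset_of_nonneg
    · intro T _; exact mem_powerset.2 (subset_univ T)
    · intro T _ _; exact abs_nonneg _
  have := neg_abs_le (∑ T ∈ F, g T)
  linarith

lemma sum_filter_swap_members (P : Finset (Finset (Fin n))) (c : Finset (Fin n) → ℝ)
    (i l : Fin n) (hil : ∀ T, 2 ≤ T.card → c T ≠ 0 → (i ∈ T ∧ l ∈ T)) :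
    ∑ T ∈ P.filter (fun T => l ∈ T ∧ 2 ≤ T.card), c T
      = ∑ T ∈ P.filter (fun T => i ∈ T ∧ 2 ≤ T.card), c T := by
  rw [Finset.sum_filter, Finset.sum_filter]
  apply Finset.sum_congr rfl
  intro T _
  by_cases hc : c T = 0
  · split <;> split <;> simp [hc]
  · by_cases h2 : 2 ≤ T.card
    · obtain ⟨hi, hl⟩ := hil T h2 hc
      rw [if_pos ⟨hl, h2⟩, if_pos ⟨hi, h2⟩]
    · rw [if_neg (fun h => h2 h.2), if_neg (fun h => h2 h.2)]

lemma marg_eq_of_agree {a b : Finset (Fin n) → ℝ} {i : Fin n}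
    (hag : ∀ T, i ∈ T → a T = b T) :
    ∀ S, gameOf a (insert i S) - gameOf a S = gameOf b (insert i S) - gameOf b S := by
  intro S
  by_cases hS : i ∈ S
  · rw [insert_eq_self.2 hS]; ring
  · rw [marg_spec a hS, marg_spec b hS]
    unfold marg
    rw [hag {i} (mem_singleton_self i)]
    congr 1
    apply Finset.sum_congr rfl
    intro T hT
    exact hag T (mem_filter.1 hT).2.1

lemma marg_divi_nonneg {u : Finset (Fin n) → ℝ} (hu : IsMonotoneGame n u)
    {l : Fin n} {S : Finset (Fin n)} (h : l ∉ S) : 0 ≤ marg (divi u) l S := by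
  rw [← marg_divi u h]
  have := hu.2 S (insert l S) (subset_insert l S)
  linarith

lemma caseA_aux {ψ χ : (Finset (Fin n) → ℝ) → Fin n → ℝ}
    (humψ : UM ψ) (humχ : UM χ) (k : ℕ)
    (IH : ∀ v, IsMonotoneGame n v → mm v < k → ∀ l, ψ v l = χ v l) :
    ∀ v, IsMonotoneGame n v → mm v ≤ k → ∀ l, (∃ T ∈ TT v, l ∉ T) → ψ v l = χ v l := by
  classical
  rintro v hv hk l ⟨T₀, hT₀, hlT₀⟩
  set M : ℝ := ∑ T ∈ univ.powerset, |divi v T| with hM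
  set a : Finset (Fin n) → ℝ :=
    fun T => if l ∈ T then divi v T else if T.card = 1 then M else 0 with ha
  -- marginal equality for l between v and gameOf a
  have hmargeq : ∀ S, v (insert l S) - v S = gameOf a (insert l S) - gameOf a S := by
    intro S
    by_cases hS : l ∈ S
    · rw [insert_eq_self.2 hS]; ring
    · rw [marg_divi v hS, marg_spec a hS]
      unfold marg
      congr 1
      · simp [ha]
      · apply Finset.sum_congr rfl
        intro T hT
        have := (mem_filter.1 hT).2.1
        simp [ha, this]
  -- monotonicity of w
  have hwmono : IsMonotoneGame n (gameOf a) := by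
    constructor
    · rw [gameOf, Finset.powerset_empty, Finset.sum_singleton]
      simp [ha]
    · apply monotone_of_marg
      intro j S hjS
      by_cases hjl : j = l
      · subst hjl
        rw [← hmargeq S]
        have := hv.2 S (insert j S) (subset_insert j S)
        linarith
      · rw [marg_spec a hjS]
        unfold marg
        have haj : a {j} = M := by
          have : l ∉ ({j} : Finset (Fin n)) := by
            simp [Ne.symm hjl]
          simp [ha, this]
        rw [haj]
        have hbound : -M ≤ ∑ T ∈ (insert j S).powerset.filter
            (fun T => j ∈ T ∧ 2 ≤ T.card), a T := by
          apply sum_ge_negM v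
          intro T hT
          have h2 : 2 ≤ T.card := (mem_filter.1 hT).2.2
          have hc1 : T.card ≠ 1 := by omega
          by_cases hlT : l ∈ T
          · simp [ha, hlT]
          · simp [ha, hlT, hc1]
        have hM0 : 0 ≤ M := Finset.sum_nonneg fun T _ => abs_nonneg _
        linarith
  -- measure decreases
  have hmw : mm (gameOf a) < k := by
    have hsub : TT (gameOf a) ⊆ (TT v).erase T₀ := by
      intro T hT
      rw [mem_TT] at hT
      obtain ⟨h2, hd⟩ := hT
      rw [divi_gameOf] at hd
      have hc1 : T.card ≠ 1 := by omega
      have hlT : l ∈ T := by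
        by_contra hlT
        apply hd
        simp [ha, hlT, hc1]
      have hdv : divi v T ≠ 0 := by
        simp only [ha, if_pos hlT] at hd
        exact hd
      rw [mem_erase]
      exact ⟨fun h => hlT₀ (h ▸ hlT), mem_TT.2 ⟨h2, hdv⟩⟩
    have h1 : (TT (gameOf a)).card ≤ ((TT v).erase T₀).card := card_le_card hsub
    have h2 : ((TT v).erase T₀).card = (TT v).card - 1 := card_erase_of_mem hT₀
    have h3 : 1 ≤ (TT v).card := card_pos.2 ⟨T₀, hT₀⟩
    have h4 : (TT v).card ≤ k := hk
    unfold mm at *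
    omega
  calc ψ v l = ψ (gameOf a) l := um_eq humψ hv hwmono l hmargeq
    _ = χ (gameOf a) l := IH (gameOf a) hwmono hmw l
    _ = χ v l := (um_eq humχ hv hwmono l hmargeq).symm

theorem agree (ψ χ : (Finset (Fin n) → ℝ) → Fin n → ℝ)
    (hpoψ : PO ψ) (hetpψ : ETP ψ) (humψ : UM ψ)
    (hpoχ : PO χ) (hetpχ : ETP χ) (humχ : UM χ) :
    ∀ u, IsMonotoneGame n u → ∀ i, ψ u i = χ u i := by
  classical
  suffices H : ∀ k u, IsMonotoneGame n u → mm u ≤ k → ∀ i, ψ u i = χ u i from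
    fun u hu i => H (mm u) u hu le_rfl i
  intro k
  induction k using Nat.strong_induction_on with
  | _ k IH =>
  have IH' : ∀ v, IsMonotoneGame n v → mm v < k → ∀ l, ψ v l = χ v l := by
    intro v hv hlt l
    exact IH (mm v) hlt v hv le_rfl l
  intro u hu hk i
  by_cases hA' : ∃ T ∈ TT u, i ∉ T
  · exact caseA_aux humψ humχ k IH' u hu hk i hA'
  · push_neg at hA'
    set M : ℝ := ∑ T ∈ univ.powerset, |divi u T| with hMdef
    set D : Finset (Fin n) := univ.filter (fun l => ∀ T ∈ TT u, l ∈ T) with hDdef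
    set a : Finset (Fin n) → ℝ := fun T =>
      if T.card = 1 then (if (∀ T' ∈ TT u, T ⊆ T') then divi u {i} else divi u T + M)
      else divi u T with hadef
    have hM0 : 0 ≤ M := Finset.sum_nonneg fun T _ => abs_nonneg _
    have hiD : i ∈ D := mem_filter.2 ⟨mem_univ i, hA'⟩
    have ha_sing_D : ∀ l, l ∈ D → a {l} = divi u {i} := by
      intro l hl
      have hl' : ∀ T' ∈ TT u, ({l} : Finset (Fin n)) ⊆ T' := by
        intro T' hT'
        exact singleton_subset_iff.2 ((mem_filter.1 hl).2 T' hT')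
      simp only [hadef, card_singleton, if_pos rfl, if_pos hl']
      simp
    have ha_sing_nD : ∀ l, l ∉ D → a {l} = divi u {l} + M := by
      intro l hl
      have hl' : ¬ (∀ T' ∈ TT u, ({l} : Finset (Fin n)) ⊆ T') := by
        intro hcon
        exact hl (mem_filter.2 ⟨mem_univ l, fun T hT => singleton_subset_iff.1 (hcon T hT)⟩)
      simp only [hadef, card_singleton, if_pos rfl, if_neg hl']
      simp
    have ha_big : ∀ T : Finset (Fin n), 2 ≤ T.card → a T = divi u T := by
      intro T h2
      have : T.card ≠ 1 := by omega
      simp only [hadef, if_neg this]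
    have hagree_i : ∀ T, i ∈ T → a T = divi u T := by
      intro T hiT
      by_cases h1 : T.card = 1
      · obtain ⟨x, hx⟩ := card_eq_one.1 h1
        subst hx
        have : i = x := mem_singleton.1 hiT
        subst this
        rw [ha_sing_D i hiD]
      · simp only [hadef, if_neg h1]
    have hmargi : ∀ S, u (insert i S) - u S = gameOf a (insert i S) - gameOf a S := by
      intro S
      have h := marg_eq_of_agree (a := divi u) (b := a)
        (fun T hT => (hagree_i T hT).symm) S
      rwa [gameOf_divi, gameOf_divi] at h
    have hu_sing : ∀ l : Fin n, 0 ≤ divi u {l} := by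
      intro l
      rw [divi_singleton, hu.1, sub_zero]
      have := hu.2 ∅ {l} (empty_subset _)
      rw [hu.1] at this
      exact this
    have hHmono : IsMonotoneGame n (gameOf a) := by
      constructor
      · rw [gameOf, Finset.powerset_empty, Finset.sum_singleton]
        have : (∅ : Finset (Fin n)).card ≠ 1 := by simp
        simp only [hadef, if_neg this]
        rw [divi_empty, hu.1]
      · apply monotone_of_marg
        intro l S hlS
        rw [marg_spec a hlS]
        by_cases hlD : l ∈ D
        · by_cases hli : l = i
          · subst hli
            rw [← marg_spec a hlS, ← hmargi S]
            have := hu.2 S (insert l S) (subset_insert l S)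
            linarith
          · have hDl : ∀ T ∈ TT u, l ∈ T := (mem_filter.1 hlD).2
            by_cases hiS : i ∈ S
            · have hins : insert i (insert l (S.erase i)) = insert l S := by
                rw [Finset.insert_comm, insert_erase hiS]
              have hiS' : i ∉ insert l (S.erase i) := by
                rw [mem_insert]
                push_neg
                exact ⟨fun h => hli h.symm, notMem_erase i S⟩
              have key : marg a l S = marg (divi u) i (insert l (S.erase i)) := by
                unfold marg
                rw [ha_sing_D l hlD, hins]
                congr 1
                have e1 : ∑ T ∈ (insert l S).powerset.filter (fun T => l ∈ T ∧ 2 ≤ T.card), a T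
                    = ∑ T ∈ (insert l S).powerset.filter (fun T => l ∈ T ∧ 2 ≤ T.card),
                        divi u T :=
                  Finset.sum_congr rfl fun T hT => ha_big T (mem_filter.1 hT).2.2
                rw [e1]
                exact sum_filter_swap_members _ (divi u) i l
                  (fun T h2 hd => ⟨hA' T (mem_TT.2 ⟨h2, hd⟩), hDl T (mem_TT.2 ⟨h2, hd⟩)⟩)
              rw [key]
              exact marg_divi_nonneg hu hiS'
            · have hz : marg a l S = divi u {i} := by
                unfold marg
                rw [ha_sing_D l hlD]
                have hzero : ∑ T ∈ (insert l S).powerset.filter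
                    (fun T => l ∈ T ∧ 2 ≤ T.card), a T = 0 := by
                  apply Finset.sum_eq_zero
                  intro T hT
                  have hp := (mem_filter.1 hT).1
                  have h2 := (mem_filter.1 hT).2.2
                  rw [ha_big T h2]
                  by_contra hd
                  have hiT : i ∈ T := hA' T (mem_TT.2 ⟨h2, hd⟩)
                  have hmem : i ∈ insert l S := (mem_powerset.1 hp) hiT
                  rcases mem_insert.1 hmem with h | h
                  · exact hli h.symm
                  · exact hiS h
                rw [hzero, add_zero]
              rw [hz]
              exact hu_sing i
        · unfold marg
          rw [ha_sing_nD l hlD]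
          have hb : -M ≤ ∑ T ∈ (insert l S).powerset.filter
              (fun T => l ∈ T ∧ 2 ≤ T.card), a T := by
            apply sum_ge_negM u
            intro T hT
            rw [ha_big T (mem_filter.1 hT).2.2]
          have := hu_sing l
          linarith
    have hTTH : TT (gameOf a) = TT u := by
      ext T
      rw [mem_TT, mem_TT]
      constructor
      · rintro ⟨h2, hd⟩
        rw [divi_gameOf, ha_big T h2] at hd
        exact ⟨h2, hd⟩
      · rintro ⟨h2, hd⟩
        refine ⟨h2, ?_⟩
        rw [divi_gameOf, ha_big T h2]
        exact hd
    have hmmH : mm (gameOf a) ≤ k := by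
      unfold mm
      rw [hTTH]
      exact hk
    have hmargD : ∀ l ∈ D, ∀ S : Finset (Fin n), l ∉ S → i ∉ S →
        gameOf a (insert l S) - gameOf a S = gameOf a (insert i S) - gameOf a S := by
      intro l hlD S hlS hiS
      by_cases hli : l = i
      · rw [hli]
      · rw [marg_spec a hlS, marg_spec a hiS]
        unfold marg
        rw [ha_sing_D l hlD, ha_sing_D i hiD]
        have hDl : ∀ T ∈ TT u, l ∈ T := (mem_filter.1 hlD).2
        have z1 : ∑ T ∈ (insert l S).powerset.filter
            (fun T => l ∈ T ∧ 2 ≤ T.card), a T = 0 := by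
          apply Finset.sum_eq_zero
          intro T hT
          have hp := (mem_filter.1 hT).1
          have h2 := (mem_filter.1 hT).2.2
          rw [ha_big T h2]
          by_contra hd
          have hiT : i ∈ T := hA' T (mem_TT.2 ⟨h2, hd⟩)
          have : i ∈ insert l S := (mem_powerset.1 hp) hiT
          rcases mem_insert.1 this with h | h
          · exact hli h.symm
          · exact hiS h
        have z2 : ∑ T ∈ (insert i S).powerset.filter
            (fun T => i ∈ T ∧ 2 ≤ T.card), a T = 0 := by
          apply Finset.sum_eq_zero
          intro T hT
          have hp := (mem_filter.1 hT).1
          have h2 := (mem_filter.1 hT).2.2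
          rw [ha_big T h2]
          by_contra hd
          have hlT : l ∈ T := hDl T (mem_TT.2 ⟨h2, hd⟩)
          have : l ∈ insert i S := (mem_powerset.1 hp) hlT
          rcases mem_insert.1 this with h | h
          · exact hli h
          · exact hlS h
        rw [z1, z2]
    have hnotD : ∀ l ∈ univ.filter (fun l => ¬ ∀ T ∈ TT u, l ∈ T),
        ψ (gameOf a) l = χ (gameOf a) l := by
      intro l hl
      have := (mem_filter.1 hl).2
      push_neg at this
      obtain ⟨T, hT, hlT⟩ := this
      refine caseA_aux humψ humχ k IH' (gameOf a) hHmono hmmH l ⟨T, ?_, hlT⟩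
      rw [hTTH]
      exact hT
    have hsplitψ := Finset.sum_filter_add_sum_filter_not univ
      (fun l => ∀ T ∈ TT u, l ∈ T) (ψ (gameOf a))
    have hsplitχ := Finset.sum_filter_add_sum_filter_not univ
      (fun l => ∀ T ∈ TT u, l ∈ T) (χ (gameOf a))
    have hpoH : ∑ l, ψ (gameOf a) l = ∑ l, χ (gameOf a) l := by
      rw [hpoψ _ hHmono, hpoχ _ hHmono]
    have hnotDsum : ∑ l ∈ univ.filter (fun l => ¬ ∀ T ∈ TT u, l ∈ T), ψ (gameOf a) l
        = ∑ l ∈ univ.filter (fun l => ¬ ∀ T ∈ TT u, l ∈ T), χ (gameOf a) l :=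
      Finset.sum_congr rfl hnotD
    have hDsum : ∑ l ∈ D, ψ (gameOf a) l = ∑ l ∈ D, χ (gameOf a) l := by
      rw [hDdef]
      linarith [hsplitψ, hsplitχ, hpoH, hnotDsum]
    have hetpDψ : ∀ l ∈ D, ψ (gameOf a) l = ψ (gameOf a) i :=
      fun l hl => hetpψ _ hHmono l i (hmargD l hl)
    have hetpDχ : ∀ l ∈ D, χ (gameOf a) l = χ (gameOf a) i :=
      fun l hl => hetpχ _ hHmono l i (hmargD l hl)
    have hkey : (D.card : ℝ) * ψ (gameOf a) i = (D.card : ℝ) * χ (gameOf a) i := by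
      calc (D.card : ℝ) * ψ (gameOf a) i = ∑ _l ∈ D, ψ (gameOf a) i := by
            rw [Finset.sum_const, nsmul_eq_mul]
        _ = ∑ l ∈ D, ψ (gameOf a) l := Finset.sum_congr rfl fun l hl => (hetpDψ l hl).symm
        _ = ∑ l ∈ D, χ (gameOf a) l := hDsum
        _ = ∑ _l ∈ D, χ (gameOf a) i := Finset.sum_congr rfl hetpDχ
        _ = (D.card : ℝ) * χ (gameOf a) i := by rw [Finset.sum_const, nsmul_eq_mul]
    have hcard : (D.card : ℝ) ≠ 0 :=
      Nat.cast_ne_zero.2 (card_pos.2 ⟨i, hiD⟩).ne'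
    have hHi : ψ (gameOf a) i = χ (gameOf a) i := mul_left_cancel₀ hcard hkey
    calc ψ u i = ψ (gameOf a) i := um_eq humψ hu hHmono i hmargi
      _ = χ (gameOf a) i := hHi
      _ = χ u i := (um_eq humχ hu hHmono i hmargi).symm


/-- A solution ψ on the class of monotone games satisfies PO (Pareto optimality),
ETP (equal treatment property) and UM (unequal marginality) iff ψ is the Shapley value
solution. -/
theorem shapley_uniqueness_unequal_marginality (n : ℕ) (hn : 1 ≤ n)
    (ψ : (Finset (Fin n) → ℝ) → Fin n → ℝ) :
    ((∀ u, IsMonotoneGame n u → ∑ i, ψ u i = u Finset.univ) ∧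
     (∀ u, IsMonotoneGame n u → ∀ i j : Fin n,
        (∀ S : Finset (Fin n), i ∉ S → j ∉ S →
          u (insert i S) - u S = u (insert j S) - u S) →
        ψ u i = ψ u j) ∧
     (∀ u v, IsMonotoneGame n u → IsMonotoneGame n v → ∀ i : Fin n,
        (∀ S : Finset (Fin n), u (insert i S) - u S ≥ v (insert i S) - v S) →
        ψ u i ≥ ψ v i)) ↔
    (∀ u, IsMonotoneGame n u → ∀ i, ψ u i = shapley u i) := by
  constructor
  · rintro ⟨hpo, hetp, hum⟩
    intro u hu i
    exact agree ψ (fun u i => shapley u i) hpo hetp hum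
      (fun u hu => shapley_po hn u hu.1) (fun u _ i j h => shapley_etp u i j h)
      (fun u v _ _ i h => shapley_um u v i h) u hu i
  · intro h
    refine ⟨?_, ?_, ?_⟩
    · intro u hu
      rw [Finset.sum_congr rfl (fun i _ => h u hu i)]
      exact shapley_po hn u hu.1
    · intro u hu i j hcond
      rw [h u hu i, h u hu j]
      exact shapley_etp u i j hcond
    · intro u v hu hv i hcond
      rw [h u hu i, h v hv i]
      exact shapley_um u v i hcond
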